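/- Let T be a triangulated category and n ≥ 2. If every object Y of T has positive n-order (equivalently n·id_Y = 0 for all objects Y), then every object of T has infinite n-order; i.e., for all k ≥ 0 and all objects Y, Y has n-order ≥ k. -/

import Mathlib

open CategoryTheory Category Limits Pretriangulated

variable {C : Type*} [Category C] [Preadditive C] [HasZeroObject C]
  [HasShift C ℤ] [∀ n : ℤ, (shiftFunctor C n).Additive] [Pretriangulated C]

/-- `nOrderGE n k Y` says that the object `Y` has `n`-order `≥ k`:
every object has `n`-order `≥ 0`; and `Y` has `n`-order `≥ k+1` iff every
morphism `f : K ⟶ Y` admits an extension `f̄ : K/n ⟶ Y` (over the structure map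
`π : K ⟶ K/n` of some cone `K/n` of `n • 𝟙 K`) such that some cone of `f̄`
has `n`-order `≥ k`. -/
def nOrderGE (n : ℕ) : ℕ → C → Prop
  | 0, _ => True
  | k + 1, Y => ∀ (K : C) (f : K ⟶ Y),
      ∃ (Kn : C) (π : K ⟶ Kn) (δ : Kn ⟶ K⟦(1 : ℤ)⟧)
        (_ : Triangle.mk ((n : ℤ) • 𝟙 K) π δ ∈ distTriang C)
        (fbar : Kn ⟶ Y) (Cf : C) (ι : Y ⟶ Cf) (δ' : Cf ⟶ Kn⟦(1 : ℤ)⟧)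
        (_ : Triangle.mk fbar ι δ' ∈ distTriang C),
        π ≫ fbar = f ∧ nOrderGE n k Cf

/-- If every object of a triangulated category `C` has positive `n`-order
(equivalently, `n • 𝟙 Y = 0` for all objects `Y`, i.e. `C` is `ℤ/n`-linear),
then every object of `C` has infinite `n`-order. -/
theorem stmt11 (n : ℕ) (hn : 2 ≤ n)
    (h : ∀ Y : C, (n : ℤ) • 𝟙 Y = 0) :
    ∀ (k : ℕ) (Y : C), nOrderGE n k Y := by
  intro k
  induction k with
  | zero => intro Y; trivial
  | succ k ih =>
    intro Y K f
    obtain ⟨Kn, π, δ, hT⟩ := Pretriangulated.distinguished_cocone_triangle ((n : ℤ) • 𝟙 K)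
    obtain ⟨fbar, hfbar⟩ := Pretriangulated.Triangle.yoneda_exact₂ _ hT f
      (by simp [Triangle.mk, h K]; rfl)
    obtain ⟨Cf, ι, δ', hT'⟩ := Pretriangulated.distinguished_cocone_triangle fbar
    exact ⟨Kn, π, δ, hT, fbar, Cf, ι, δ', hT', hfbar.symm, ih Cf⟩
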